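/- Let q be a complex number with |q| = 1, let F and K_u be complex Hilbert spaces, let P be an orthogonal projection and U a unitary on F, and let (W₁,W₂) be a pair of unitaries on K_u with W₁W₂ = qW₂W₁. Then the BCL-1 q-model pair ( (R_q⊗P^⊥U + M_zR_q⊗PU) ⊕ W₁ , (R_{q̄}⊗U*P + R_{q̄}M_z⊗U*P^⊥) ⊕ W₂ ) on (H²⊗F) ⊕ K_u is a q-commutative pair of isometries, i.e., both entries are isometries and V₁V₂ = qV₂V₁. -/

import Mathlib

open ContinuousLinearMap

local notation "⟪" x ", " y "⟫" => @inner ℂ _ _ x y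

private lemma aux_inner_map {G : Type*} [NormedAddCommGroup G] [InnerProductSpace ℂ G]
    [CompleteSpace G] (T : G →L[ℂ] G) (h : adjoint T ∘L T = 1) (a b : G) :
    ⟪T a, T b⟫ = ⟪a, b⟫ := by
  have h' : adjoint T (T a) = a := by simpa using DFunLike.congr_fun h a
  rw [← adjoint_inner_left, h']

private lemma aux_isometry {G : Type*} [NormedAddCommGroup G] [InnerProductSpace ℂ G]
    [CompleteSpace G] (T : G →L[ℂ] G) (h : ∀ a b, ⟪T a, T b⟫ = ⟪a, b⟫) :
    adjoint T ∘L T = 1 := by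
  ext a
  refine ext_inner_right ℂ fun b => ?_
  rw [comp_apply, adjoint_inner_left, one_apply_eq_self, h]

private lemma aux_tsum_split (c d a : ℕ → ℂ) (hc : Summable c) (hd : Summable d)
    (ha0 : a 0 = c 0) (han : ∀ n, a (n + 1) = c (n + 1) + d n) :
    ∑' n, a n = (∑' n, c n) + ∑' n, d n := by
  have hc' : Summable fun n => c (n + 1) := (summable_nat_add_iff 1).2 hc
  have ha : Summable a := by
    rw [← summable_nat_add_iff 1]
    simpa [han] using hc'.add hd
  rw [Summable.tsum_eq_zero_add ha, ha0, tsum_congr han, Summable.tsum_add hc' hd, ← add_assoc,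
    ← Summable.tsum_eq_zero_add hc]

private lemma aux_summable {F : Type*} [NormedAddCommGroup F] [InnerProductSpace ℂ F]
    (A B : F →L[ℂ] F) (f g : lp (fun _ : ℕ => F) 2) :
    Summable fun n => ⟪A (f n), B (g n)⟫ := by
  have hmul : Summable fun n => ‖f n‖ * ‖g n‖ :=
    lp.summable_mul (by rw [Real.holderConjugate_iff]; norm_num) f g
  refine Summable.of_norm_bounded (g := fun n => ‖A‖ * ‖B‖ * (‖f n‖ * ‖g n‖))
    (hmul.mul_left _) fun n => ?_
  calc ‖⟪A (f n), B (g n)⟫‖ ≤ ‖A (f n)‖ * ‖B (g n)‖ := norm_inner_le_norm _ _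
    _ ≤ (‖A‖ * ‖f n‖) * (‖B‖ * ‖g n‖) :=
        mul_le_mul (le_opNorm A _) (le_opNorm B _) (norm_nonneg _) (by positivity)
    _ = ‖A‖ * ‖B‖ * (‖f n‖ * ‖g n‖) := by ring

/-- The model space `(H² ⊗ F) ⊕ K_u`, with `H² ⊗ F` identified with `ℓ²(ℕ, F)`. -/
noncomputable abbrev BCLModelSpace (F Ku : Type*) [NormedAddCommGroup F]
    [InnerProductSpace ℂ F] [NormedAddCommGroup Ku] [InnerProductSpace ℂ Ku] :=
  WithLp 2 ((lp (fun _ : ℕ => F) 2) × Ku)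

set_option maxHeartbeats 1000000 in
theorem stmt_4 (q : ℂ) (hq : ‖q‖ = 1)
    {F Ku : Type*} [NormedAddCommGroup F] [InnerProductSpace ℂ F] [CompleteSpace F]
    [NormedAddCommGroup Ku] [InnerProductSpace ℂ Ku] [CompleteSpace Ku]
    (P U : F →L[ℂ] F)
    (hP_idem : P ∘L P = P) (hP_sa : IsSelfAdjoint P)
    (hU₁ : adjoint U ∘L U = 1) (hU₂ : U ∘L adjoint U = 1)
    (W₁ W₂ : Ku →L[ℂ] Ku)
    (hW₁₁ : adjoint W₁ ∘L W₁ = 1) (hW₁₂ : W₁ ∘L adjoint W₁ = 1)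
    (hW₂₁ : adjoint W₂ ∘L W₂ = 1) (hW₂₂ : W₂ ∘L adjoint W₂ = 1)
    (hW : W₁ ∘L W₂ = q • (W₂ ∘L W₁))
    (V₁ V₂ : BCLModelSpace F Ku →L[ℂ] BCLModelSpace F Ku)
    -- V₁ = (R_q ⊗ P^⊥U + M_z R_q ⊗ PU) ⊕ W₁, described coordinatewise:
    (hV₁u : ∀ x, (WithLp.equiv 2 _ (V₁ x)).2 = W₁ ((WithLp.equiv 2 _ x).2))
    (hV₁0 : ∀ x, ((WithLp.equiv 2 _ (V₁ x)).1 : ∀ _ : ℕ, F) 0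
      = (1 - P) (U (((WithLp.equiv 2 _ x).1 : ∀ _ : ℕ, F) 0)))
    (hV₁n : ∀ x, ∀ n : ℕ, ((WithLp.equiv 2 _ (V₁ x)).1 : ∀ _ : ℕ, F) (n + 1)
      = q ^ (n + 1) • (1 - P) (U (((WithLp.equiv 2 _ x).1 : ∀ _ : ℕ, F) (n + 1)))
        + q ^ n • P (U (((WithLp.equiv 2 _ x).1 : ∀ _ : ℕ, F) n)))
    -- V₂ = (R_q̄ ⊗ U*P + R_q̄ M_z ⊗ U*P^⊥) ⊕ W₂, described coordinatewise:
    (hV₂u : ∀ x, (WithLp.equiv 2 _ (V₂ x)).2 = W₂ ((WithLp.equiv 2 _ x).2))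
    (hV₂0 : ∀ x, ((WithLp.equiv 2 _ (V₂ x)).1 : ∀ _ : ℕ, F) 0
      = adjoint U (P (((WithLp.equiv 2 _ x).1 : ∀ _ : ℕ, F) 0)))
    (hV₂n : ∀ x, ∀ n : ℕ, ((WithLp.equiv 2 _ (V₂ x)).1 : ∀ _ : ℕ, F) (n + 1)
      = (starRingEnd ℂ q) ^ (n + 1) •
          (adjoint U (P (((WithLp.equiv 2 _ x).1 : ∀ _ : ℕ, F) (n + 1)))
            + adjoint U ((1 - P) (((WithLp.equiv 2 _ x).1 : ∀ _ : ℕ, F) n)))) :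
    adjoint V₁ ∘L V₁ = 1 ∧ adjoint V₂ ∘L V₂ = 1 ∧ V₁ ∘L V₂ = q • (V₂ ∘L V₁) := by
  simp only [WithLp.equiv_apply] at hV₁u hV₁0 hV₁n hV₂u hV₂0 hV₂n
  -- scalar facts
  have hq1' : q * (starRingEnd ℂ) q = 1 := by
    rw [Complex.mul_conj]
    norm_cast
    rw [Complex.normSq_eq_norm_sq, hq]; norm_num
  have hq1 : (starRingEnd ℂ) q * q = 1 := by rw [mul_comm]; exact hq1'
  have hk2 : ∀ k : ℕ, q ^ k * ((starRingEnd ℂ) q) ^ k = 1 := fun k => by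
    rw [← mul_pow, hq1', one_pow]
  have hk2' : ∀ k : ℕ, ((starRingEnd ℂ) q) ^ k * q ^ k = 1 := fun k => by
    rw [← mul_pow, hq1, one_pow]
  -- projection facts
  have hPadj : adjoint P = P := ContinuousLinearMap.isSelfAdjoint_iff'.mp hP_sa
  have hPP : ∀ z, P (P z) = P z := fun z => DFunLike.congr_fun hP_idem z
  have hPQ : ∀ z : F, P ((1 - P) z) = 0 := by
    intro z; simp [ContinuousLinearMap.sub_apply, map_sub, hPP]
  have hQP : ∀ z : F, (1 - P) (P z) = 0 := by
    intro z; simp [ContinuousLinearMap.sub_apply, hPP]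
  have hQQ : ∀ z : F, (1 - P) ((1 - P) z) = (1 - P) z := by
    intro z; simp [ContinuousLinearMap.sub_apply, map_sub, hPP]
  have hPinner : ∀ a b : F, ⟪P a, b⟫ = ⟪a, P b⟫ := fun a b => by
    conv_lhs => rw [← hPadj]
    exact adjoint_inner_left P b a
  have hQinner : ∀ a b : F, ⟪(1 - P) a, b⟫ = ⟪a, (1 - P) b⟫ := fun a b => by
    simp only [ContinuousLinearMap.sub_apply, one_apply_eq_self, inner_sub_left, inner_sub_right, hPinner]
  have hQPinner : ∀ a b : F, ⟪(1 - P) a, P b⟫ = 0 := fun a b => by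
    rw [hQinner, hQP, inner_zero_right]
  have hPQinner : ∀ a b : F, ⟪P a, (1 - P) b⟫ = 0 := fun a b => by
    rw [hPinner, hPQ, inner_zero_right]
  have hsplit : ∀ a b : F, ⟪P a, P b⟫ + ⟪(1 - P) a, (1 - P) b⟫ = ⟪a, b⟫ := fun a b => by
    rw [hPinner, hPP, hQinner, hQQ, ← inner_add_right]
    simp [ContinuousLinearMap.sub_apply]
  -- smul inner facts
  have hsm' : ∀ (k : ℕ) (a b : F), ⟪((starRingEnd ℂ) q) ^ k • a, ((starRingEnd ℂ) q) ^ k • b⟫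
      = ⟪a, b⟫ := fun k a b => by
    rw [inner_smul_left, inner_smul_right, ← mul_assoc, map_pow, Complex.conj_conj, hk2, one_mul]
  -- pointwise unitarity facts
  have hUU : ∀ z : F, adjoint U (U z) = z := fun z => by simpa using DFunLike.congr_fun hU₁ z
  have hUU' : ∀ z : F, U (adjoint U z) = z := fun z => by simpa using DFunLike.congr_fun hU₂ z
  have hUin : ∀ a b : F, ⟪U a, U b⟫ = ⟪a, b⟫ := aux_inner_map U hU₁
  have hUin' : ∀ a b : F, ⟪adjoint U a, adjoint U b⟫ = ⟪a, b⟫ :=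
    aux_inner_map (adjoint U) (by rwa [adjoint_adjoint])
  have hW₁in : ∀ a b : Ku, ⟪W₁ a, W₁ b⟫ = ⟪a, b⟫ := aux_inner_map W₁ hW₁₁
  have hW₂in : ∀ a b : Ku, ⟪W₂ a, W₂ b⟫ = ⟪a, b⟫ := aux_inner_map W₂ hW₂₁
  refine ⟨aux_isometry V₁ fun x y => ?_, aux_isometry V₂ fun x y => ?_, ?_⟩
  · -- V₁ isometry
    rw [WithLp.prod_inner_apply, WithLp.prod_inner_apply]
    congr 1
    · -- lp part
      rw [lp.inner_eq_tsum, lp.inner_eq_tsum]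
      have hc := aux_summable ((1 - P) ∘L U) ((1 - P) ∘L U) (Prod.fst x.ofLp) (Prod.fst y.ofLp)
      have hd := aux_summable (P ∘L U) (P ∘L U) (Prod.fst x.ofLp) (Prod.fst y.ofLp)
      simp only [comp_apply] at hc hd
      rw [aux_tsum_split _ _ _ hc hd (by rw [hV₁0 x, hV₁0 y])
        (fun n => by
          rw [hV₁n x n, hV₁n y n]
          simp only [inner_add_left, inner_add_right, inner_smul_left, inner_smul_right,
            hQPinner, hPQinner, mul_zero, add_zero, zero_add, map_pow, ← mul_assoc, hk2, hk2',
            one_mul]),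
        ← Summable.tsum_add hc hd]
      exact tsum_congr fun n => by rw [add_comm, hsplit, hUin]
    · rw [hV₁u x, hV₁u y, hW₁in]
  · -- V₂ isometry
    rw [WithLp.prod_inner_apply, WithLp.prod_inner_apply]
    congr 1
    · rw [lp.inner_eq_tsum, lp.inner_eq_tsum]
      have hc := aux_summable P P (Prod.fst x.ofLp) (Prod.fst y.ofLp)
      have hd := aux_summable (1 - P) (1 - P) (Prod.fst x.ofLp) (Prod.fst y.ofLp)
      rw [aux_tsum_split _ _ _ hc hd (by rw [hV₂0 x, hV₂0 y, hUin'])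
        (fun n => by
          rw [hV₂n x n, hV₂n y n, hsm']
          simp only [inner_add_left, inner_add_right, hUin', hQPinner, hPQinner,
            add_zero, zero_add]),
        ← Summable.tsum_add hc hd]
      exact tsum_congr fun n => by rw [hsplit]
    · rw [hV₂u x, hV₂u y, hW₂in]
  · -- q-commutation
    ext x
    simp only [comp_apply, smul_apply]
    refine (WithLp.ext_iff 2).2 (Prod.ext ?_ ?_)
    · refine lp.ext (funext fun n => ?_)
      have hsmul : ∀ k : ℕ, ((Prod.fst (q • V₂ (V₁ x)).ofLp : lp (fun _ : ℕ => F) 2) : ∀ _ : ℕ, F) k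
          = q • ((Prod.fst (V₂ (V₁ x)).ofLp : lp (fun _ : ℕ => F) 2) : ∀ _ : ℕ, F) k := by
        intro k
        rw [WithLp.ofLp_smul, Prod.smul_fst, lp.coeFn_smul, Pi.smul_apply]
      -- helper computations
      have l2 : ∀ m : ℕ, P (U (((Prod.fst (V₂ x).ofLp : lp (fun _ : ℕ => F) 2) : ∀ _ : ℕ, F) m))
          = ((starRingEnd ℂ) q) ^ m • P (((Prod.fst x.ofLp : lp (fun _ : ℕ => F) 2) : ∀ _ : ℕ, F) m) := by
        intro m
        match m with
        | 0 => rw [hV₂0, hUU', hPP, pow_zero, one_smul]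
        | (m + 1) =>
          rw [hV₂n x m, map_smul, map_smul, map_add, hUU', hUU', map_add, hPP, hPQ, add_zero]
      have r2 : ∀ m : ℕ, (1 - P) (((Prod.fst (V₁ x).ofLp : lp (fun _ : ℕ => F) 2) : ∀ _ : ℕ, F) m)
          = q ^ m • (1 - P) (U (((Prod.fst x.ofLp : lp (fun _ : ℕ => F) 2) : ∀ _ : ℕ, F) m)) := by
        intro m
        match m with
        | 0 => rw [hV₁0, hQQ, pow_zero, one_smul]
        | (m + 1) =>
          rw [hV₁n x m, map_add, map_smul, map_smul, hQQ, hQP, smul_zero, add_zero]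
      match n with
      | 0 =>
        rw [hsmul 0, hV₁0, hV₂0, hUU', hQP, hV₂0, hV₁0, hPQ, map_zero, smul_zero]
      | (n + 1) =>
        have r1 : P (((Prod.fst (V₁ x).ofLp : lp (fun _ : ℕ => F) 2) : ∀ _ : ℕ, F) (n + 1))
            = q ^ n • P (U (((Prod.fst x.ofLp : lp (fun _ : ℕ => F) 2) : ∀ _ : ℕ, F) n)) := by
          rw [hV₁n x n, map_add, map_smul, map_smul, hPQ, smul_zero, zero_add, hPP]
        have hPQz : ∀ z : F, P z + (1 - P) z = z := fun z => by
          simp [ContinuousLinearMap.sub_apply]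
        have hco : q * (((starRingEnd ℂ) q) ^ (n + 1) * q ^ n) = 1 := by
          rw [mul_comm (((starRingEnd ℂ) q) ^ (n + 1)), ← mul_assoc, ← pow_succ', hk2]
        rw [hsmul (n + 1), hV₁n (V₂ x) n, hV₂n (V₁ x) n, hV₂n x n, l2 n, r1, r2 n]
        simp only [map_smul, map_add]
        simp only [hUU', hUU, hQP, hQQ, hPP, hPQ, zero_add, add_zero, smul_zero]
        rw [← smul_add, ← map_add (adjoint U), hPQz, hUU]
        simp only [smul_smul]
        rw [hk2, hk2, hco, one_smul, one_smul, one_smul, add_comm]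
        exact hPQz _
    · rw [hV₁u (V₂ x), hV₂u x, WithLp.ofLp_smul, Prod.smul_snd, hV₂u (V₁ x), hV₁u x]
      simpa using DFunLike.congr_fun hW (Prod.snd x.ofLp)
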